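/- arXiv:2411.02516 — 2 statements merged into one kernel-verified Lean document; each statement's English description precedes it below -/
import Mathlib

section
/- Let H be a finite rank free abelian group and let RH be a (possibly crossed/twisted) group ring over a ring R with no zero divisors. Then for nonzero x, y ∈ RH, the Newton polytope is multiplicative: P(xy) = P(x) + P(y), where + is Minkowski sum. -/
open scoped Pointwise

/-- Multiplication in a crossed/twisted group ring `R ∗ H` of the free abelian group
`H = ι → ℤ` over `R`, determined by an action `σ` of `H` on `R` by ring automorphisms and a
2-cocycle `τ` with values in the units of `R`:
`(r ∗ g)(r' ∗ h) = r · σ_g(r') · τ(g,h) ∗ (g + h)`. -/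
noncomputable def twistedMul {R : Type*} [Ring R] {ι : Type*}
    (σ : (ι → ℤ) → RingAut R) (τ : (ι → ℤ) → (ι → ℤ) → Rˣ)
    (a b : (ι → ℤ) →₀ R) : (ι → ℤ) →₀ R :=
  a.sum fun g r => b.sum fun h r' => Finsupp.single (g + h) (r * σ g r' * (τ g h : R))

/-- The Newton polytope of a nonzero element `x = Σ x_h h` of the (twisted) group ring:
the convex hull in `H ⊗ ℝ = ι → ℝ` of the support `{h : x_h ≠ 0}`. -/
noncomputable def newtonPolytope {R : Type*} [Ring R] {ι : Type*}
    (x : (ι → ℤ) →₀ R) : Set (ι → ℝ) :=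
  convexHull ℝ ((fun (v : ι → ℤ) (i : ι) => (v i : ℝ)) '' (x.support : Set (ι → ℤ)))

/-- If `R` has no zero divisors, then for nonzero elements `x, y` of the twisted group ring
of a finite rank free abelian group `H` over `R`, the Newton polytope is multiplicative:
`P(xy) = P(x) + P(y)` (Minkowski sum). -/
theorem newtonPolytope_twistedMul {R : Type*} [Ring R] [NoZeroDivisors R]
    {ι : Type*} [Fintype ι]
    (σ : (ι → ℤ) → RingAut R) (τ : (ι → ℤ) → (ι → ℤ) → Rˣ)
    (x y : (ι → ℤ) →₀ R) (hx : x ≠ 0) (hy : y ≠ 0) :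
    newtonPolytope (twistedMul σ τ x y) = newtonPolytope x + newtonPolytope y := by
  classical
  set e : (ι → ℤ) → (ι → ℝ) := fun v i => (v i : ℝ) with he
  have einj : Function.Injective e := by
    intro a b h
    funext i
    have := congrFun h i
    simp only [e] at this
    exact_mod_cast this
  have eadd : ∀ a b : ι → ℤ, e (a + b) = e a + e b := by
    intro a b; funext i; simp [e]
  -- coefficient formula
  have hcoef : ∀ v, (twistedMul σ τ x y) v =
      ∑ g ∈ x.support, ∑ h ∈ y.support,
        if g + h = v then x g * σ g (y h) * (τ g h : R) else 0 := by
    intro v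
    simp only [twistedMul, Finsupp.sum_apply, Finsupp.sum, Finsupp.finset_sum_apply,
      Finsupp.single_apply]
  -- support inclusion
  have hsupp : ((twistedMul σ τ x y).support : Set (ι → ℤ)) ⊆
      (x.support : Set (ι → ℤ)) + (y.support : Set (ι → ℤ)) := by
    intro v hv
    rw [Finset.mem_coe, Finsupp.mem_support_iff] at hv
    by_contra hnv
    apply hv
    rw [hcoef]
    refine Finset.sum_eq_zero fun g hg => Finset.sum_eq_zero fun h hh => ?_
    rw [if_neg]
    intro heq
    exact hnv ⟨g, hg, h, hh, heq⟩
  -- unique decompositions give nonzero coefficients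
  have hmain : ∀ g₀ ∈ x.support, ∀ h₀ ∈ y.support,
      (∀ g ∈ x.support, ∀ h ∈ y.support, g + h = g₀ + h₀ → g = g₀ ∧ h = h₀) →
      (g₀ + h₀) ∈ (twistedMul σ τ x y).support := by
    intro g₀ hg₀ h₀ hh₀ huniq
    rw [Finsupp.mem_support_iff, hcoef]
    have hx0 : x g₀ ≠ 0 := Finsupp.mem_support_iff.1 hg₀
    have hy0 : y h₀ ≠ 0 := Finsupp.mem_support_iff.1 hh₀
    have hsum : (∑ g ∈ x.support, ∑ h ∈ y.support,
        if g + h = g₀ + h₀ then x g * σ g (y h) * (τ g h : R) else 0)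
        = x g₀ * σ g₀ (y h₀) * (τ g₀ h₀ : R) := by
      rw [Finset.sum_eq_single_of_mem g₀ hg₀, Finset.sum_eq_single_of_mem h₀ hh₀, if_pos rfl]
      · intro h hh hne
        rw [if_neg]
        intro heq
        exact hne (huniq g₀ hg₀ h hh heq).2
      · intro g hg hne
        refine Finset.sum_eq_zero fun h hh => ?_
        rw [if_neg]
        intro heq
        exact hne (huniq g hg h hh heq).1
    rw [hsum]
    haveI : Nontrivial R := nontrivial_of_ne _ _ hx0
    have hσ : σ g₀ (y h₀) ≠ 0 := fun h => hy0 <| by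
      have := (σ g₀).injective (a₁ := y h₀) (a₂ := 0)
      simpa using this (by simpa using h)
    exact mul_ne_zero (mul_ne_zero hx0 hσ) (τ g₀ h₀).ne_zero
  -- sets
  set A : Set (ι → ℝ) := e '' (x.support : Set (ι → ℤ)) with hA
  set B : Set (ι → ℝ) := e '' (y.support : Set (ι → ℤ)) with hB
  set S : Set (ι → ℝ) := e '' ((twistedMul σ τ x y).support : Set (ι → ℤ)) with hS
  have himadd : ∀ (s t : Set (ι → ℤ)), e '' (s + t) = e '' s + e '' t := by
    intro s t
    ext v
    constructor
    · rintro ⟨w, ⟨a, ha, b, hb, rfl⟩, rfl⟩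
      exact ⟨e a, ⟨a, ha, rfl⟩, e b, ⟨b, hb, rfl⟩, (eadd a b).symm⟩
    · rintro ⟨-, ⟨a, ha, rfl⟩, -, ⟨b, hb, rfl⟩, rfl⟩
      exact ⟨a + b, ⟨a, ha, b, hb, rfl⟩, eadd a b⟩
  have hgoal : newtonPolytope (twistedMul σ τ x y) = convexHull ℝ S := rfl
  have hgx : newtonPolytope x = convexHull ℝ A := rfl
  have hgy : newtonPolytope y = convexHull ℝ B := rfl
  rw [hgoal, hgx, hgy, ← convexHull_add]
  -- ⊆ direction
  have hsub : S ⊆ A + B := by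
    rw [hA, hB, ← himadd]
    exact Set.image_mono hsupp
  refine le_antisymm (convexHull_mono hsub) ?_
  -- ⊇ direction via Krein–Milman
  have hABfin : (A + B).Finite :=
    ((x.support.finite_toSet.image e).add (y.support.finite_toSet.image e))
  set C := convexHull ℝ (A + B) with hC
  have hext : C.extremePoints ℝ ⊆ S := by
    intro v hv
    have hvAB : v ∈ A + B := extremePoints_convexHull_subset hv
    obtain ⟨-, ⟨g₀, hg₀, rfl⟩, -, ⟨h₀, hh₀, rfl⟩, rfl⟩ := hvAB
    set v := e g₀ + e h₀
    have huniq : ∀ g ∈ x.support, ∀ h ∈ y.support, g + h = g₀ + h₀ → g = g₀ ∧ h = h₀ := by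
      intro g hg h hh heq
      have heq' : e g + e h = v := by rw [← eadd, heq, eadd]
      set p := e g + e h₀ with hp
      set q := e g₀ + e h with hq
      have hpq : p + q = v + v := by
        rw [hp, hq]
        rw [show e g + e h₀ + (e g₀ + e h) = (e g + e h) + (e g₀ + e h₀) by abel, heq']
      have hpC : p ∈ C := subset_convexHull ℝ _ ⟨e g, ⟨g, hg, rfl⟩, e h₀, ⟨h₀, hh₀, rfl⟩, rfl⟩
      have hqC : q ∈ C := subset_convexHull ℝ _ ⟨e g₀, ⟨g₀, hg₀, rfl⟩, e h, ⟨h, hh, rfl⟩, rfl⟩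
      have hseg : v ∈ openSegment ℝ p q := by
        refine ⟨1/2, 1/2, by norm_num, by norm_num, by norm_num, ?_⟩
        calc (1/2 : ℝ) • p + (1/2 : ℝ) • q = (1/2 : ℝ) • (p + q) := (smul_add _ _ _).symm
          _ = (1/2 : ℝ) • (v + v) := by rw [hpq]
          _ = v := by rw [← two_smul ℝ v, smul_smul]; norm_num
      obtain ⟨hpv, hqv⟩ := (mem_extremePoints.1 hv).2 p hpC q hqC hseg
      have hpv' : e g + e h₀ = e g₀ + e h₀ := hpv
      have hqv' : e g₀ + e h = e g₀ + e h₀ := hqv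
      have hgg : g = g₀ := einj (add_right_cancel hpv')
      have hhh : h = h₀ := einj (add_left_cancel hqv')
      exact ⟨hgg, hhh⟩
    have := hmain g₀ hg₀ h₀ hh₀ huniq
    exact ⟨g₀ + h₀, this, by rw [eadd]⟩
  have hcomp : IsCompact C := hABfin.isCompact_convexHull ℝ
  have hKM : closure (convexHull ℝ (C.extremePoints ℝ)) = C :=
    closure_convexHull_extremePoints hcomp (convex_convexHull ℝ _)
  calc C = closure (convexHull ℝ (C.extremePoints ℝ)) := hKM.symm
    _ ⊆ closure (convexHull ℝ S) := closure_mono (convexHull_mono hext)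
    _ = convexHull ℝ S :=
      (((twistedMul σ τ x y).support.finite_toSet.image e).isClosed_convexHull ℝ).closure_eq
end

section
/- Let L be a finite chordal connected flag complex. If the right-angled Artin group A_L does not split as an amalgam over a clique subgroup distinct from the factors, then L is a simplex (and A_L is free abelian). Equivalently: if L is connected, chordal, and not a simplex, then A_L splits as an amalgamated free product A_{L₀} ∗_{A_K} A_{L₁} where K is a simplex in L and L₀, L₁ are proper induced subcomplexes covering L with L₀ ∩ L₁ = K. -/
/-- Commutator relations of the right-angled Artin group of a simple graph. -/
def raagRels {V : Type*} (G : SimpleGraph V) : Set (FreeGroup V) :=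
  {r | ∃ v w : V, G.Adj v w ∧
    r = FreeGroup.of v * FreeGroup.of w * (FreeGroup.of v)⁻¹ * (FreeGroup.of w)⁻¹}

/-- The right-angled Artin group of a simple graph (equivalently, of its flag complex). -/
abbrev RAAG {V : Type*} (G : SimpleGraph V) : Type _ :=
  PresentedGroup (raagRels G)

/-- A graph is chordal if it has no induced cycle of length greater than 3. -/
def IsChordalGraph {V : Type*} (G : SimpleGraph V) : Prop :=
  ∀ n : ℕ, 4 ≤ n → IsEmpty (SimpleGraph.cycleGraph n ↪g G)

section PartA

variable {V : Type*} {G : SimpleGraph V}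

private lemma raag_commute {v w : V} (h : G.Adj v w) :
    Commute (PresentedGroup.of v : RAAG G) (PresentedGroup.of w) := by
  have h1 : (PresentedGroup.mk (raagRels G))
      (FreeGroup.of v * FreeGroup.of w * (FreeGroup.of v)⁻¹ * (FreeGroup.of w)⁻¹) = 1 :=
    (QuotientGroup.eq_one_iff _).mpr (Subgroup.subset_normalClosure ⟨v, w, h, rfl⟩)
  have h2 : (PresentedGroup.of v : RAAG G) * PresentedGroup.of w * (PresentedGroup.of v)⁻¹ *
      (PresentedGroup.of w)⁻¹ = 1 := by
    simpa [map_mul, map_inv, PresentedGroup.of] using h1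
  rw [mul_inv_eq_one, mul_inv_eq_iff_eq_mul] at h2
  exact h2

private def raagHom {W : Type*} {H : SimpleGraph W} (f : V → W)
    (hf : ∀ a b : V, G.Adj a b → H.Adj (f a) (f b)) : RAAG G →* RAAG H :=
  PresentedGroup.toGroup (f := fun v => (PresentedGroup.of (f v) : RAAG H)) (by
    rintro r ⟨v, w, hvw, rfl⟩
    simp only [map_mul, map_inv, FreeGroup.lift_apply_of]
    rw [(raag_commute (hf v w hvw)).eq]
    group)

@[simp] private lemma raagHom_of {W : Type*} {H : SimpleGraph W} (f : V → W)
    (hf : ∀ a b : V, G.Adj a b → H.Adj (f a) (f b)) (v : V) :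
    raagHom f hf (PresentedGroup.of v) = PresentedGroup.of (f v) :=
  PresentedGroup.toGroup.of _

private lemma raag_pushout (L₀ L₁ : Set V)
    (hcov : L₀ ∪ L₁ = Set.univ)
    (hedge : ∀ a b : V, G.Adj a b → (a ∈ L₀ ∧ b ∈ L₀) ∨ (a ∈ L₁ ∧ b ∈ L₁)) :
    ∃ φ : ∀ i : Fin 2, RAAG (G.induce (L₀ ∩ L₁)) →*
            RAAG (G.induce (if i = 0 then L₀ else L₁)),
      (∀ (i : Fin 2) (x : ↥(L₀ ∩ L₁)) (hx : (x : V) ∈ (if i = 0 then L₀ else L₁)),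
        φ i (PresentedGroup.of x) =
          PresentedGroup.of (⟨(x : V), hx⟩ : ↥(if i = 0 then L₀ else L₁))) ∧
      Nonempty (RAAG G ≃* Monoid.PushoutI φ) := by
  classical
  have hmem : ∀ v : V, v ∈ L₀ ∨ v ∈ L₁ := by
    intro v
    have : v ∈ L₀ ∪ L₁ := by rw [hcov]; trivial
    exact this
  set K : Set V := L₀ ∩ L₁ with hK
  set Ls : Fin 2 → Set V := fun i => if i = 0 then L₀ else L₁ with hLs
  have hsub : ∀ i : Fin 2, ∀ v : V, v ∈ K → v ∈ Ls i := by
    intro i v hv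
    fin_cases i
    · exact hv.1
    · exact hv.2
  -- the parabolic inclusions
  refine ⟨fun i => raagHom (fun x => (⟨x.1, hsub i x.1 x.2⟩ : ↥(Ls i)))
      (fun a b hadj => hadj), fun i x hx => rfl, ?_⟩
  set φ : ∀ i : Fin 2, RAAG (G.induce K) →* RAAG (G.induce (Ls i)) :=
    fun i => raagHom (fun x => (⟨x.1, hsub i x.1 x.2⟩ : ↥(Ls i))) (fun a b hadj => hadj) with hφ
  -- the forward map on generators
  set F : V → Monoid.PushoutI φ := fun v =>
    if h : v ∈ L₀ then Monoid.PushoutI.of (φ := φ) 0 (PresentedGroup.of (⟨v, h⟩ : ↥(Ls 0)))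
    else Monoid.PushoutI.of (φ := φ) 1
      (PresentedGroup.of (⟨v, (hmem v).resolve_left h⟩ : ↥(Ls 1))) with hF
  have same_img : ∀ (v : V) (h0 : v ∈ L₀) (h1 : v ∈ L₁),
      Monoid.PushoutI.of (φ := φ) 0 (PresentedGroup.of (⟨v, h0⟩ : ↥(Ls 0)))
        = Monoid.PushoutI.of (φ := φ) 1 (PresentedGroup.of (⟨v, h1⟩ : ↥(Ls 1))) := by
    intro v h0 h1
    have e0 : (PresentedGroup.of (⟨v, h0⟩ : ↥(Ls 0)) : RAAG (G.induce (Ls 0)))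
        = φ 0 (PresentedGroup.of (⟨v, ⟨h0, h1⟩⟩ : ↥K)) := by
      exact (raagHom_of (fun x : ↥K => (⟨x.1, hsub 0 x.1 x.2⟩ : ↥(Ls 0))) (fun a b hadj => hadj) ⟨v, ⟨h0, h1⟩⟩).symm
    have e1 : (PresentedGroup.of (⟨v, h1⟩ : ↥(Ls 1)) : RAAG (G.induce (Ls 1)))
        = φ 1 (PresentedGroup.of (⟨v, ⟨h0, h1⟩⟩ : ↥K)) := by
      exact (raagHom_of (fun x : ↥K => (⟨x.1, hsub 1 x.1 x.2⟩ : ↥(Ls 1))) (fun a b hadj => hadj) ⟨v, ⟨h0, h1⟩⟩).symm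
    rw [e0, e1, Monoid.PushoutI.of_apply_eq_base, Monoid.PushoutI.of_apply_eq_base]
  have hF0 : ∀ (v : V) (h0 : v ∈ L₀),
      F v = Monoid.PushoutI.of (φ := φ) 0 (PresentedGroup.of (⟨v, h0⟩ : ↥(Ls 0))) := by
    intro v h0; rw [hF]; simp only [dif_pos h0]
  have hF1 : ∀ (v : V) (h1 : v ∈ L₁),
      F v = Monoid.PushoutI.of (φ := φ) 1 (PresentedGroup.of (⟨v, h1⟩ : ↥(Ls 1))) := by
    intro v h1
    by_cases h0 : v ∈ L₀
    · rw [hF]; simp only [dif_pos h0]; exact same_img v h0 h1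
    · rw [hF]; simp only [dif_neg h0]
  have Fcomm : ∀ v w : V, G.Adj v w → Commute (F v) (F w) := by
    intro v w hvw
    rcases hedge v w hvw with ⟨hv, hw⟩ | ⟨hv, hw⟩
    · rw [hF0 v hv, hF0 w hw]
      have : Commute (PresentedGroup.of (⟨v, hv⟩ : ↥(Ls 0)) : RAAG (G.induce (Ls 0)))
          (PresentedGroup.of (⟨w, hw⟩ : ↥(Ls 0))) := raag_commute hvw
      exact this.map _
    · rw [hF1 v hv, hF1 w hw]
      have : Commute (PresentedGroup.of (⟨v, hv⟩ : ↥(Ls 1)) : RAAG (G.induce (Ls 1)))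
          (PresentedGroup.of (⟨w, hw⟩ : ↥(Ls 1))) := raag_commute hvw
      exact this.map _
  have hrels : ∀ r ∈ raagRels G, FreeGroup.lift F r = 1 := by
    rintro r ⟨v, w, hvw, rfl⟩
    simp only [map_mul, map_inv, FreeGroup.lift_apply_of]
    rw [(Fcomm v w hvw).eq]
    group
  set Θ : RAAG G →* Monoid.PushoutI φ := PresentedGroup.toGroup hrels with hΘ
  -- the backward map
  have hrelsL : ∀ i : Fin 2, ∀ r ∈ raagRels (G.induce (Ls i)),
      FreeGroup.lift (fun x : ↥(Ls i) => (PresentedGroup.of x.1 : RAAG G)) r = 1 := by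
    rintro i r ⟨v, w, hvw, rfl⟩
    simp only [map_mul, map_inv, FreeGroup.lift_apply_of]
    rw [(raag_commute (G := G) (show G.Adj ↑v ↑w from hvw)).eq]
    group
  have hrelsK : ∀ r ∈ raagRels (G.induce K),
      FreeGroup.lift (fun x : ↥K => (PresentedGroup.of x.1 : RAAG G)) r = 1 := by
    rintro r ⟨v, w, hvw, rfl⟩
    simp only [map_mul, map_inv, FreeGroup.lift_apply_of]
    rw [(raag_commute (G := G) (show G.Adj ↑v ↑w from hvw)).eq]
    group
  set Ψ : Monoid.PushoutI φ →* RAAG G :=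
    Monoid.PushoutI.lift (fun i => PresentedGroup.toGroup (hrelsL i))
      (PresentedGroup.toGroup hrelsK)
      (by
        intro i
        refine PresentedGroup.ext fun x => ?_
        simp only [MonoidHom.comp_apply, hφ, raagHom_of, PresentedGroup.toGroup.of]
        exact (congrArg _ (raagHom_of _ _ _)).trans (PresentedGroup.toGroup.of _)) with hΨ
  have hΨΘ : Ψ.comp Θ = MonoidHom.id _ := by
    refine PresentedGroup.ext fun v => ?_
    simp only [MonoidHom.comp_apply, MonoidHom.id_apply, hΘ, PresentedGroup.toGroup.of]
    by_cases h0 : v ∈ L₀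
    · rw [hF0 v h0, hΨ, Monoid.PushoutI.lift_of, PresentedGroup.toGroup.of]
    · rw [hF1 v ((hmem v).resolve_left h0), hΨ, Monoid.PushoutI.lift_of,
        PresentedGroup.toGroup.of]
  have hΘΨ : Θ.comp Ψ = MonoidHom.id _ := by
    refine Monoid.PushoutI.hom_ext_nonempty fun i => ?_
    refine PresentedGroup.ext fun x => ?_
    simp only [MonoidHom.comp_apply, MonoidHom.id_apply, hΨ, Monoid.PushoutI.lift_of,
      PresentedGroup.toGroup.of, hΘ]
    fin_cases i
    · rw [hF0 x.1 x.2]; rfl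
    · rw [hF1 x.1 x.2]; rfl
  exact ⟨MonoidHom.toMulEquiv Θ Ψ hΨΘ hΘΨ⟩

end PartA

namespace SepAux
open SimpleGraph Walk

variable {V : Type*} {G : SimpleGraph V}

/-- take the first `n` darts of a walk -/
def wtake {u v : V} : (p : G.Walk u v) → (n : ℕ) → G.Walk u (p.getVert n)
  | p, 0 => Walk.nil.copy rfl (Walk.getVert_zero p).symm
  | Walk.nil, _+1 => Walk.nil
  | Walk.cons h q, n+1 => Walk.cons h (wtake q n)

lemma length_wtake {u v : V} (p : G.Walk u v) (n : ℕ) :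
    (wtake p n).length = min n p.length := by
  induction p generalizing n with
  | nil => cases n <;> simp [wtake]
  | cons h q ih =>
    cases n with
    | zero => simp [wtake]
    | succ n => rw [show wtake (Walk.cons h q) (n+1) = Walk.cons h (wtake q n) from rfl]; show (wtake q n).length + 1 = min (n+1) (q.length+1); simp only [Walk.length_cons, ih]; omega

lemma support_wtake_subset {u v : V} (p : G.Walk u v) (n : ℕ) :
    ∀ z ∈ (wtake p n).support, z ∈ p.support := by
  induction p generalizing n with
  | nil => cases n <;> simp [wtake]
  | cons h q ih =>
    cases n with
    | zero => simp [wtake]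
    | succ n =>
      intro z hz
      simp only [wtake, support_cons, List.mem_cons] at hz ⊢
      change z ∈ _ :: (wtake q n).support at hz
      rw [List.mem_cons] at hz
      rcases hz with rfl | hz
      · exact Or.inl rfl
      · exact Or.inr (ih n z hz)

lemma length_drop {u v : V} (p : G.Walk u v) (n : ℕ) :
    (p.drop n).length = p.length - n := by
  induction p generalizing n with
  | nil => cases n <;> simp [Walk.drop, Walk.getVert]
  | cons h q ih =>
    cases n with
    | zero => simp [Walk.drop]
    | succ n => simpa [Walk.drop] using ih n

lemma support_drop_subset {u v : V} (p : G.Walk u v) (n : ℕ) :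
    ∀ z ∈ (p.drop n).support, z ∈ p.support := by
  induction p generalizing n with
  | nil => cases n <;> simp [Walk.drop, Walk.getVert]
  | cons h q ih =>
    cases n with
    | zero => simp [Walk.drop]
    | succ n =>
      intro z hz
      simp only [Walk.drop, support_copy, support_cons, List.mem_cons] at hz ⊢
      exact Or.inr (ih n z hz)

lemma shortcut_adj {u v : V} (p : G.Walk u v) {i j : ℕ} (hi : i ≤ p.length)
    (h : G.Adj (p.getVert i) (p.getVert j)) :
    ∃ q : G.Walk u v, q.length = i + 1 + (p.length - j) ∧
      ∀ z ∈ q.support, z ∈ p.support := by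
  refine ⟨(wtake p i).append (Walk.cons h (p.drop j)), ?_, ?_⟩
  · simp only [Walk.length_append, Walk.length_cons, length_wtake, length_drop,
      Nat.min_eq_left hi]
    omega
  · intro z hz
    rw [Walk.mem_support_append_iff] at hz
    rcases hz with hz | hz
    · exact support_wtake_subset p i z hz
    · simp only [support_cons, List.mem_cons] at hz
      rcases hz with rfl | hz
      · exact Walk.mem_support_iff_exists_getVert.mpr ⟨i, rfl, hi⟩
      · exact support_drop_subset p j z hz

lemma shortcut_eq {u v : V} (p : G.Walk u v) {i j : ℕ} (hi : i ≤ p.length)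
    (h : p.getVert i = p.getVert j) :
    ∃ q : G.Walk u v, q.length = i + (p.length - j) ∧
      ∀ z ∈ q.support, z ∈ p.support := by
  refine ⟨(wtake p i).append ((p.drop j).copy h.symm rfl), ?_, ?_⟩
  · simp [Walk.length_append, length_wtake, length_drop, Nat.min_eq_left hi]
  · intro z hz
    rw [Walk.mem_support_append_iff] at hz
    rcases hz with hz | hz
    · exact support_wtake_subset p i z hz
    · rw [Walk.support_copy] at hz
      exact support_drop_subset p j z hz

/-- From a set of walks between two distinct non-adjacent vertices, all of whose
vertices lie in `{x, y} ∪ C`, extract a minimal one: it is an induced path of length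
at least two with interior in `C`. -/
lemma exists_nice_walk {x y : V} (C : Set V) (hxy : x ≠ y) (hnadj : ¬ G.Adj x y)
    (hne : ∃ p : G.Walk x y, ∀ z ∈ p.support, z = x ∨ z = y ∨ z ∈ C) :
    ∃ p : G.Walk x y, 2 ≤ p.length ∧
      (∀ i, i ≤ p.length → ∀ j, j ≤ p.length → p.getVert i = p.getVert j → i = j) ∧
      (∀ i j, i < j → j ≤ p.length → G.Adj (p.getVert i) (p.getVert j) → j = i + 1) ∧
      (∀ k, 0 < k → k < p.length → p.getVert k ∈ C) := by
  classical
  set W : G.Walk x y → Prop := fun p => ∀ z ∈ p.support, z = x ∨ z = y ∨ z ∈ C with hW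
  have hkne : ∃ k, ∃ p : G.Walk x y, W p ∧ p.length = k := by
    obtain ⟨p, hp⟩ := hne
    exact ⟨p.length, p, hp, rfl⟩
  obtain ⟨p, hpW, hplen⟩ := Nat.find_spec hkne
  have hmin : ∀ q : G.Walk x y, W q → p.length ≤ q.length := by
    intro q hq
    rw [hplen]
    exact Nat.find_le ⟨q, hq, rfl⟩
  -- injectivity
  have hinj : ∀ i, i ≤ p.length → ∀ j, j ≤ p.length → p.getVert i = p.getVert j → i = j := by
    have key : ∀ i j, i < j → j ≤ p.length → p.getVert i ≠ p.getVert j := by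
      intro i j hij hj he
      obtain ⟨q, hqlen, hqsub⟩ := shortcut_eq p (le_trans (le_of_lt hij) hj) he
      have hqW : W q := fun z hz => hpW z (hqsub z hz)
      have := hmin q hqW
      omega
    intro i hi j hj he
    rcases lt_trichotomy i j with h | h | h
    · exact absurd he (key i j h hj)
    · exact h
    · exact absurd he.symm (key j i h hi)
  have hchord : ∀ i j, i < j → j ≤ p.length → G.Adj (p.getVert i) (p.getVert j) → j = i + 1 := by
    intro i j hij hj hadj
    by_contra hne1
    have h1 : i + 1 < j := by omega
    obtain ⟨q, hqlen, hqsub⟩ := shortcut_adj p (le_trans (le_of_lt hij) hj) hadj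
    have hqW : W q := fun z hz => hpW z (hqsub z hz)
    have := hmin q hqW
    omega
  have hlen2 : 2 ≤ p.length := by
    rcases Nat.lt_or_ge p.length 2 with h | h
    · interval_cases hl : p.length
      · exact absurd (Walk.eq_of_length_eq_zero hl) hxy
      · have := p.adj_getVert_succ (i := 0) (by omega)
        rw [Walk.getVert_zero] at this
        have h1 : p.getVert 1 = y := by
          have := p.getVert_length
          rwa [hl] at this
        rw [h1] at this
        exact absurd this hnadj
    · exact h
  refine ⟨p, hlen2, hinj, hchord, ?_⟩
  intro k hk0 hkm
  have hks : p.getVert k ∈ p.support :=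
    Walk.mem_support_iff_exists_getVert.mpr ⟨k, rfl, le_of_lt hkm⟩
  rcases hpW _ hks with h | h | h
  · exfalso
    have : k = 0 := hinj k (le_of_lt hkm) 0 (by omega) (by rw [h, Walk.getVert_zero])
    omega
  · exfalso
    have : k = p.length := hinj k (le_of_lt hkm) p.length le_rfl
      (by rw [h, Walk.getVert_length])
    omega
  · exact h

end SepAux


namespace SepAux
open SimpleGraph Walk

variable {V : Type*} {G : SimpleGraph V}

/-- The set of vertices reachable from `c` by a walk avoiding `S`. -/
def Cside (G : SimpleGraph V) (S : Finset V) (c : V) : Set V :=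
  {v | ∃ w : G.Walk c v, ∀ z ∈ w.support, z ∉ S}

lemma Cside.not_mem_S {S : Finset V} {c v : V} (h : v ∈ Cside G S c) : v ∉ S := by
  obtain ⟨w, hw⟩ := h
  exact hw v w.end_mem_support

lemma Cside.of_mem_support [DecidableEq V] {S : Finset V} {c v u : V} (w : G.Walk c v)
    (hw : ∀ z ∈ w.support, z ∉ S) (hu : u ∈ w.support) : u ∈ Cside G S c :=
  ⟨w.takeUntil u hu, fun z hz => hw z (w.support_takeUntil_subset hu hz)⟩

lemma Cside.adj {S : Finset V} {c v u : V} (h : v ∈ Cside G S c) (hadj : G.Adj v u)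
    (hu : u ∉ S) : u ∈ Cside G S c := by
  obtain ⟨w, hw⟩ := h
  refine ⟨w.concat hadj, fun z hz => ?_⟩
  rw [Walk.support_concat] at hz
  simp only [List.concat_eq_append, List.mem_append, List.mem_singleton] at hz
  rcases hz with hz | rfl
  · exact hw z hz
  · exact hu

lemma neighbor_in_side [DecidableEq V] {S : Finset V} {c d s : V} (w : G.Walk c d)
    (hs : s ∈ w.support) (hcs : c ≠ s)
    (hw : ∀ z ∈ w.support, z ∈ S → z = s) :
    ∃ u, G.Adj s u ∧ u ∈ Cside G S c := by
  set p := w.takeUntil s hs with hp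
  have hpsub : ∀ z ∈ p.support, z ∈ w.support := fun z hz => w.support_takeUntil_subset hs hz
  have hcount : p.support.count s = 1 := w.count_support_takeUntil_eq_one hs
  set r := p.reverse with hr
  have hrnil : ¬ r.Nil := Walk.not_nil_of_ne (fun h => hcs h.symm)
  refine ⟨r.getVert 1, r.adj_snd hrnil, r.tail.reverse, ?_⟩
  have htail : r.tail.support = r.support.tail := support_tail_of_not_nil r hrnil
  have hrsup : r.support = p.support.reverse := p.support_reverse
  have hcons : r.support = s :: r.support.tail := r.support_eq_cons
  have hcnt2 : r.support.count s = 1 := by rw [hrsup, List.count_reverse]; exact hcount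
  have hsnot : s ∉ r.support.tail := by
    rw [hcons, List.count_cons_self] at hcnt2
    exact List.count_eq_zero.mp (by omega)
  intro z hz
  rw [Walk.support_reverse, List.mem_reverse, htail] at hz
  intro hzS
  have hzw : z ∈ w.support := by
    apply hpsub
    rw [← List.mem_reverse, ← hrsup]
    exact List.mem_of_mem_tail hz
  have : z = s := hw z hzw hzS
  rw [this] at hz
  exact hsnot hz

lemma sep_clique [Fintype V] [DecidableEq V] (hchordal : IsChordalGraph G) (a b : V)
    (S : Finset V) (hSa : a ∉ S) (hSb : b ∉ S)
    (hsep : ∀ w : G.Walk a b, ∃ z ∈ w.support, z ∈ S)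
    (hmin : ∀ S' : Finset V, a ∉ S' → b ∉ S' →
      (∀ w : G.Walk a b, ∃ z ∈ w.support, z ∈ S') → S.card ≤ S'.card) :
    G.IsClique (↑S : Set V) := by
  rintro x hx y hy hxy
  by_contra hnadj
  have hxS : x ∈ S := hx
  have hyS : y ∈ S := hy
  -- disjointness of the two sides
  have hdisj : ∀ v, v ∈ Cside G S a → v ∈ Cside G S b → False := by
    rintro v ⟨w1, h1⟩ ⟨w2, h2⟩
    obtain ⟨z, hz, hzS⟩ := hsep (w1.append w2.reverse)
    rw [Walk.mem_support_append_iff] at hz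
    rcases hz with hz | hz
    · exact h1 z hz hzS
    · rw [Walk.support_reverse, List.mem_reverse] at hz
      exact h2 z hz hzS
  have hcross : ∀ u v, u ∈ Cside G S a → v ∈ Cside G S b → ¬ G.Adj u v := by
    intro u v hu hv hadj
    exact hdisj v (Cside.adj hu hadj (Cside.not_mem_S hv)) hv
  -- every vertex of S has a neighbour on each side
  have hnbhd : ∀ s ∈ S, (∃ u, G.Adj s u ∧ u ∈ Cside G S a) ∧
      (∃ u, G.Adj s u ∧ u ∈ Cside G S b) := by
    intro s hsS
    have hcard : (S.erase s).card < S.card := Finset.card_erase_lt_of_mem hsS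
    have hnot : ¬ (∀ w : G.Walk a b, ∃ z ∈ w.support, z ∈ S.erase s) := by
      intro h
      have := hmin (S.erase s) (fun h' => hSa (Finset.mem_of_mem_erase h'))
        (fun h' => hSb (Finset.mem_of_mem_erase h')) h
      omega
    push_neg at hnot
    obtain ⟨w, hw⟩ := hnot
    have hws : ∀ z ∈ w.support, z ∈ S → z = s := by
      intro z hz hzS
      have := hw z hz
      rw [Finset.mem_erase] at this
      by_contra hne
      exact this ⟨hne, hzS⟩
    have hsw : s ∈ w.support := by
      obtain ⟨z, hz, hzS⟩ := hsep w
      rwa [hws z hz hzS] at hz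
    have has : a ≠ s := fun h => hSa (h ▸ hsS)
    have hbs : b ≠ s := fun h => hSb (h ▸ hsS)
    refine ⟨neighbor_in_side w hsw has hws, ?_⟩
    have hsw' : s ∈ w.reverse.support := by rwa [Walk.support_reverse, List.mem_reverse]
    exact neighbor_in_side w.reverse hsw' hbs
      (fun z hz hzS => hws z (by rwa [Walk.support_reverse, List.mem_reverse] at hz) hzS)
  -- a connecting walk through each side
  have hWne : ∀ c : V, (∀ s ∈ S, ∃ u, G.Adj s u ∧ u ∈ Cside G S c) →
      ∃ p : G.Walk x y, ∀ z ∈ p.support, z = x ∨ z = y ∨ z ∈ Cside G S c := by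
    intro c hnb
    obtain ⟨u, hxu, huC⟩ := hnb x hxS
    obtain ⟨u', hyu', hu'C⟩ := hnb y hyS
    obtain ⟨w1, hw1⟩ := huC
    obtain ⟨w2, hw2⟩ := hu'C
    refine ⟨Walk.cons hxu ((w1.reverse.append w2).concat hyu'.symm), ?_⟩
    intro z hz
    simp only [Walk.support_cons, List.mem_cons] at hz
    rcases hz with rfl | hz
    · exact Or.inl rfl
    rw [Walk.support_concat] at hz
    simp only [List.concat_eq_append, List.mem_append, List.mem_singleton] at hz
    rcases hz with hz | rfl
    · rw [Walk.mem_support_append_iff] at hz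
      rcases hz with hz | hz
      · rw [Walk.support_reverse, List.mem_reverse] at hz
        exact Or.inr (Or.inr (Cside.of_mem_support w1 hw1 hz))
      · exact Or.inr (Or.inr (Cside.of_mem_support w2 hw2 hz))
    · exact Or.inr (Or.inl rfl)
  obtain ⟨p, hpl, hpinj, hpchord, hpint⟩ :=
    exists_nice_walk (Cside G S a) hxy hnadj (hWne a (fun s hs => (hnbhd s hs).1))
  obtain ⟨q, hql, hqinj, hqchord, hqint⟩ :=
    exists_nice_walk (Cside G S b) hxy hnadj (hWne b (fun s hs => (hnbhd s hs).2))
  set m := p.length with hm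
  set m' := q.length with hm'
  set n := m + m' with hn
  have hn4 : 4 ≤ n := by omega
  set fv : ℕ → V := fun i => if i ≤ m then p.getVert i else q.getVert (n - i) with hfv
  have hp0 : p.getVert 0 = x := p.getVert_zero
  have hpm : p.getVert m = y := p.getVert_length
  have hq0 : q.getVert 0 = x := q.getVert_zero
  have hqm' : q.getVert m' = y := q.getVert_length
  have hxCb : x ∉ Cside G S b := fun h => Cside.not_mem_S h hxS
  have hyCb : y ∉ Cside G S b := fun h => Cside.not_mem_S h hyS
  -- injectivity on ℕ indices
  have hinj' : ∀ i j, i < j → j < n → fv i ≠ fv j := by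
    intro i j hij hjn
    by_cases hj : j ≤ m
    · rw [hfv]
      simp only [if_pos (le_trans (le_of_lt hij) hj), if_pos hj]
      intro he
      have := hpinj i (le_trans (le_of_lt hij) hj) j hj he
      omega
    · have hk : 1 ≤ n - j ∧ n - j ≤ m' - 1 := by omega
      have hkint : q.getVert (n - j) ∈ Cside G S b := hqint _ (by omega) (by omega)
      by_cases hi : i ≤ m
      · rw [hfv]
        simp only [if_pos hi, if_neg hj]
        rcases Nat.eq_or_lt_of_le (Nat.zero_le i) with h0 | h0
        · rw [← h0, p.getVert_zero]
          exact fun he => hxCb (he ▸ hkint)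
        rcases Nat.eq_or_lt_of_le hi with hm0 | hm0
        · subst hm0
          rw [p.getVert_length]
          exact fun he => hyCb (he ▸ hkint)
        · have hpi : p.getVert i ∈ Cside G S a := hpint i h0 hm0
          exact fun he => hdisj _ hpi (he ▸ hkint)
      · rw [hfv]
        simp only [if_neg hi, if_neg hj]
        intro he
        have := hqinj (n - i) (by omega) (n - j) (by omega) he
        omega
  -- adjacency characterisation on ℕ indices
  have hadj' : ∀ i j, i < j → j < n →
      (G.Adj (fv i) (fv j) ↔ (j = i + 1 ∨ (i = 0 ∧ j = n - 1))) := by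
    intro i j hij hjn
    by_cases hj : j ≤ m
    · rw [hfv]
      simp only [if_pos (le_trans (le_of_lt hij) hj), if_pos hj]
      constructor
      · intro had
        exact Or.inl (hpchord i j hij hj had)
      · rintro (rfl | ⟨rfl, hjn1⟩)
        · exact p.adj_getVert_succ (by omega)
        · omega
    · by_cases hi : i ≤ m
      · rw [hfv]
        simp only [if_pos hi, if_neg hj]
        rcases Nat.eq_or_lt_of_le (Nat.zero_le i) with h0 | h0
        · -- i = 0 : fv i = x = q.getVert 0
          subst h0
          have key : G.Adj (q.getVert 0) (q.getVert (n - j)) ↔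
              (j = 0 + 1 ∨ (0 = 0 ∧ j = n - 1)) := by
            constructor
            · intro had
              have := hqchord 0 (n - j) (by omega) (by omega) had
              omega
            · rintro (h | ⟨-, h⟩)
              · omega
              · have hnj : n - j = 1 := by omega
                rw [hnj]
                exact q.adj_getVert_succ (by omega)
          rw [hq0] at key
          rw [p.getVert_zero]
          exact key
        · rcases Nat.eq_or_lt_of_le hi with hm0 | hm0
          · -- i = m : fv i = y = q.getVert m'
            subst hm0
            have key : G.Adj (q.getVert m') (q.getVert (n - j)) ↔
                (j = m + 1 ∨ (m = 0 ∧ j = n - 1)) := by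
              constructor
              · intro had
                have := hqchord (n - j) m' (by omega) le_rfl had.symm
                omega
              · rintro (h | ⟨h, -⟩)
                · have h1 : n - j = m' - 1 := by omega
                  have h2 : m' - 1 + 1 = m' := by omega
                  have := q.adj_getVert_succ (i := m' - 1) (by omega)
                  rw [h2] at this
                  rw [h1]
                  exact this.symm
                · omega
            rw [hqm'] at key
            rw [p.getVert_length]
            exact key
          · -- interior vs interior : no adjacency, no cycle edge
            have hpi : p.getVert i ∈ Cside G S a := hpint i h0 hm0
            have hkint : q.getVert (n - j) ∈ Cside G S b := hqint _ (by omega) (by omega)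
            constructor
            · intro had
              exact absurd had (hcross _ _ hpi hkint)
            · rintro (h | ⟨h, -⟩) <;> omega
      · rw [hfv]
        simp only [if_neg hi, if_neg hj]
        constructor
        · intro had
          have := hqchord (n - j) (n - i) (by omega) (by omega) had.symm
          omega
        · rintro (rfl | ⟨h, -⟩)
          · have h1 : n - i - 1 = n - (i+1) := by omega
            have h2 : n - i - 1 + 1 = n - i := by omega
            have := q.adj_getVert_succ (i := n - i - 1) (by omega)
            rw [h2] at this
            rw [← h1]
            exact this.symm
          · omega
  -- the cycle graph adjacency in ℕ terms
  have hsubval : ∀ i j : Fin n, ((i - j : Fin n) : ℕ) = (n - (j : ℕ) + (i : ℕ)) % n := by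
    intro i j
    rw [Fin.sub_def]
  have hmod : ∀ i j : ℕ, i < n → j < n →
      ((n - j + i) % n = 1 ↔ (i = j + 1 ∨ (j = n - 1 ∧ i = 0))) := by
    intro i j hi hj
    rcases Nat.lt_or_ge (n - j + i) n with h | h
    · rw [Nat.mod_eq_of_lt h]; omega
    · rw [Nat.mod_eq_sub_mod h, Nat.mod_eq_of_lt (by omega)]; omega
  have hcycadj : ∀ i j : Fin n, (SimpleGraph.cycleGraph n).Adj i j ↔
      ((j : ℕ) = (i : ℕ) + 1 ∨ (i : ℕ) = (j : ℕ) + 1 ∨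
        ((i : ℕ) = 0 ∧ (j : ℕ) = n - 1) ∨ ((j : ℕ) = 0 ∧ (i : ℕ) = n - 1)) := by
    intro i j
    rw [SimpleGraph.cycleGraph_adj', hsubval, hsubval, hmod _ _ i.isLt j.isLt,
      hmod _ _ j.isLt i.isLt]
    tauto
  -- build the embedding
  have hemb : Nonempty (SimpleGraph.cycleGraph n ↪g G) := by
    refine ⟨⟨⟨fun i => fv (i : ℕ), ?_⟩, ?_⟩⟩
    · intro i j he
      by_contra hne
      rcases Nat.lt_trichotomy (i : ℕ) (j : ℕ) with h | h | h
      · exact hinj' _ _ h j.isLt he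
      · exact hne (Fin.ext h)
      · exact hinj' _ _ h i.isLt he.symm
    · intro i j
      show G.Adj (fv (i : ℕ)) (fv (j : ℕ)) ↔ _
      rw [hcycadj]
      rcases Nat.lt_trichotomy (i : ℕ) (j : ℕ) with h | h | h
      · rw [hadj' _ _ h j.isLt]
        constructor
        · intro hh; omega
        · intro hh
          have hj0 : (j : ℕ) ≠ 0 := by omega
          have hin : (i : ℕ) < n := i.isLt
          omega
      · have : i = j := Fin.ext h
        subst this
        constructor
        · intro had
          exact absurd had (G.loopless.irrefl _)
        · intro hh
          exfalso
          omega
      · rw [G.adj_comm, hadj' _ _ h i.isLt]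
        constructor
        · intro hh; omega
        · intro hh
          have hi0 : (i : ℕ) ≠ 0 := by omega
          have hjn : (j : ℕ) < n := j.isLt
          omega
  exact (hchordal n hn4).false hemb.some

end SepAux

/-- Let `L` be a finite connected chordal flag complex which is not a simplex (its graph is
not complete).  Then `A_L` splits as an amalgamated free product
`A_{L₀} ∗_{A_K} A_{L₁}` where `K = L₀ ∩ L₁` is a simplex (a clique) and `L₀, L₁` are proper
induced subcomplexes covering `L`.  The amalgam is expressed as `Monoid.PushoutI` of the
parabolic inclusions `A_K →* A_{L₀}`, `A_K →* A_{L₁}` (which send standard generators to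
standard generators). -/
theorem raag_chordal_splits_over_simplex {V : Type*} [Fintype V] [DecidableEq V]
    (G : SimpleGraph V) (hconn : G.Connected) (hchordal : IsChordalGraph G)
    (hnotsimplex : ∃ a b : V, a ≠ b ∧ ¬ G.Adj a b) :
    ∃ L₀ L₁ : Set V,
      G.IsClique (L₀ ∩ L₁) ∧
      L₀ ∪ L₁ = Set.univ ∧ L₀ ≠ Set.univ ∧ L₁ ≠ Set.univ ∧
      (∀ a b : V, G.Adj a b → (a ∈ L₀ ∧ b ∈ L₀) ∨ (a ∈ L₁ ∧ b ∈ L₁)) ∧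
      ∃ φ : ∀ i : Fin 2, RAAG (G.induce (L₀ ∩ L₁)) →*
              RAAG (G.induce (if i = 0 then L₀ else L₁)),
        (∀ (i : Fin 2) (x : ↥(L₀ ∩ L₁)) (hx : (x : V) ∈ (if i = 0 then L₀ else L₁)),
          φ i (PresentedGroup.of x) =
            PresentedGroup.of (⟨(x : V), hx⟩ : ↥(if i = 0 then L₀ else L₁))) ∧
        Nonempty (RAAG G ≃* Monoid.PushoutI φ) := by
  classical
  obtain ⟨a, b, hab, hnadj⟩ := hnotsimplex
  -- every walk from `a` to `b` passes through a third vertex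
  have hmid : ∀ w : G.Walk a b, ∃ z ∈ w.support, z ∈ (Finset.univ.erase a).erase b := by
    intro w
    have hnil : ¬ w.Nil := SimpleGraph.Walk.not_nil_of_ne hab
    have hlen : 1 ≤ w.length := by
      rcases Nat.eq_zero_or_pos w.length with h | h
      · exact absurd (SimpleGraph.Walk.nil_iff_length_eq.mpr h) hnil
      · exact h
    have hadj1 := w.adj_snd hnil
    refine ⟨w.getVert 1, SimpleGraph.Walk.mem_support_iff_exists_getVert.mpr ⟨1, rfl, hlen⟩, ?_⟩
    rw [Finset.mem_erase, Finset.mem_erase]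
    exact ⟨fun h => hnadj (h ▸ hadj1), (G.ne_of_adj hadj1).symm, Finset.mem_univ _⟩
  -- a minimal separator
  have hPne : ∃ k : ℕ, ∃ S : Finset V,
      (a ∉ S ∧ b ∉ S ∧ ∀ w : G.Walk a b, ∃ z ∈ w.support, z ∈ S) ∧ S.card = k :=
    ⟨_, (Finset.univ.erase a).erase b, ⟨by simp, by simp, hmid⟩, rfl⟩
  obtain ⟨S, ⟨hSa, hSb, hsep⟩, hScard⟩ := Nat.find_spec hPne
  have hmin : ∀ S' : Finset V, a ∉ S' → b ∉ S' →
      (∀ w : G.Walk a b, ∃ z ∈ w.support, z ∈ S') → S.card ≤ S'.card := by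
    intro S' h1 h2 h3
    rw [hScard]
    exact Nat.find_le ⟨S', ⟨h1, h2, h3⟩, rfl⟩
  have hclique : G.IsClique (↑S : Set V) := SepAux.sep_clique hchordal a b S hSa hSb hsep hmin
  set Ca := SepAux.Cside G S a with hCa
  have haCa : a ∈ Ca := ⟨SimpleGraph.Walk.nil, by
    intro z hz
    simp only [SimpleGraph.Walk.support_nil, List.mem_singleton] at hz
    exact hz ▸ hSa⟩
  have hbCa : b ∉ Ca := by
    rintro ⟨w, hw⟩
    obtain ⟨z, hz, hzS⟩ := hsep w
    exact hw z hz hzS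
  set L₀ : Set V := Ca ∪ ↑S with hL₀
  set L₁ : Set V := Caᶜ with hL₁
  have hK : L₀ ∩ L₁ = ↑S := by
    ext v
    constructor
    · rintro ⟨h1 | h1, h2⟩
      · exact absurd h1 h2
      · exact h1
    · intro hv
      exact ⟨Or.inr hv, fun hca => SepAux.Cside.not_mem_S hca hv⟩
  have hcov : L₀ ∪ L₁ = Set.univ := by
    apply Set.eq_univ_of_forall
    intro v
    by_cases h : v ∈ Ca
    · exact Or.inl (Or.inl h)
    · exact Or.inr h
  have hedge : ∀ u v : V, G.Adj u v → (u ∈ L₀ ∧ v ∈ L₀) ∨ (u ∈ L₁ ∧ v ∈ L₁) := by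
    intro u v hadj
    by_cases hu : u ∈ Ca
    · left
      refine ⟨Or.inl hu, ?_⟩
      by_cases hv : v ∈ S
      · exact Or.inr hv
      · exact Or.inl (SepAux.Cside.adj hu hadj hv)
    · by_cases hv : v ∈ Ca
      · left
        have huS : u ∈ S := by
          by_contra huS
          exact hu (SepAux.Cside.adj hv hadj.symm huS)
        exact ⟨Or.inr huS, Or.inl hv⟩
      · exact Or.inr ⟨hu, hv⟩
  obtain ⟨φ, hφ, hiso⟩ := raag_pushout L₀ L₁ hcov hedge
  refine ⟨L₀, L₁, ?_, hcov, ?_, ?_, hedge, φ, hφ, hiso⟩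
  · rw [hK]
    exact hclique
  · intro h
    rcases Set.eq_univ_iff_forall.mp h b with hb | hb
    · exact hbCa hb
    · exact hSb hb
  · intro h
    exact Set.eq_univ_iff_forall.mp h a haCa
end
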